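/- arXiv:1704.01123 — 7 statements merged into one kernel-verified Lean document; each statement's English description precedes it below -/
import Mathlib

section
/- For the H-twisted Dorfman bracket on TM ⊕ T*M with H a (not necessarily closed) 3-form, the failure of the Leibniz identity is measured exactly by dH: one has [ψ,[ψ',ψ'']] − [[ψ,ψ'],ψ''] − [ψ',[ψ,ψ'']] = (0, −dH(X,Y,Z,·)) where X, Y, Z are the vector parts of ψ, ψ', ψ''. In particular, the Leibniz identity holds for all sections if and only if dH = 0. -/
/-!
An algebraic model of the generalized tangent bundle `TM ⊕ T*M`:
`R` is the ring of smooth functions `C^∞(M)`, vector fields are derivations of `R`,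
and sections of `TM ⊕ T*M` are pairs of a vector field and a `1`-form
(an `R`-linear functional on vector fields).
-/

section Dorfman

variable {R : Type*} [CommRing R] [Algebra ℝ R]

/-- A covector part of a section: an `R`-linear functional on vector fields. -/
def IsOneForm (ξ : Derivation ℝ R R → R) : Prop :=
  ∀ (f : R) (a b : Derivation ℝ R R), ξ (f • a + b) = f * ξ a + ξ b

/-- A `3`-form on `M`: alternating and `R`-multilinear in each slot. -/
def IsThreeForm (H : Derivation ℝ R R → Derivation ℝ R R → Derivation ℝ R R → R) : Prop :=
  (∀ (f : R) (X X' Y Z), H (f • X + X') Y Z = f * H X Y Z + H X' Y Z) ∧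
  (∀ (f : R) (X Y Y' Z), H X (f • Y + Y') Z = f * H X Y Z + H X Y' Z) ∧
  (∀ (f : R) (X Y Z Z'), H X Y (f • Z + Z') = f * H X Y Z + H X Y Z') ∧
  (∀ X Y Z, H X Y Z = - H Y X Z) ∧ (∀ X Y Z, H X Y Z = - H X Z Y)

/-- The de Rham differential of a `3`-form, by the global (Koszul) formula. -/
def dThree (H : Derivation ℝ R R → Derivation ℝ R R → Derivation ℝ R R → R)
    (X Y Z W : Derivation ℝ R R) : R :=
  X (H Y Z W) - Y (H X Z W) + Z (H X Y W) - W (H X Y Z)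
    - H ⁅X, Y⁆ Z W + H ⁅X, Z⁆ Y W - H ⁅X, W⁆ Y Z
    - H ⁅Y, Z⁆ X W + H ⁅Y, W⁆ X Z - H ⁅Z, W⁆ X Y

/-- The `H`-twisted Dorfman bracket
`[(X,ξ),(Y,η)] = ([X,Y], L_X η − i_Y dξ − H(X,Y,·))` written pointwise. -/
def dorfman (H : Derivation ℝ R R → Derivation ℝ R R → Derivation ℝ R R → R)
    (ψ φ : Derivation ℝ R R × (Derivation ℝ R R → R)) :
    Derivation ℝ R R × (Derivation ℝ R R → R) :=
  (⁅ψ.1, φ.1⁆, fun Z =>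
    (ψ.1 (φ.2 Z) - φ.2 ⁅ψ.1, Z⁆)
      - (φ.1 (ψ.2 Z) - Z (ψ.2 φ.1) - ψ.2 ⁅φ.1, Z⁆)
      - H ψ.1 φ.1 Z)

/-- The canonical pairing `⟨(X,ξ),(Y,η)⟩ = η(X) + ξ(Y)`. -/
def pairTV (ψ φ : Derivation ℝ R R × (Derivation ℝ R R → R)) : R :=
  ψ.2 φ.1 + φ.2 ψ.1

/-- Multiplication of a section by a function. -/
def smulTV (f : R) (ψ : Derivation ℝ R R × (Derivation ℝ R R → R)) :
    Derivation ℝ R R × (Derivation ℝ R R → R) :=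
  (f • ψ.1, fun Z => f * ψ.2 Z)

/-- Sum of sections. -/
def addTV (ψ φ : Derivation ℝ R R × (Derivation ℝ R R → R)) :
    Derivation ℝ R R × (Derivation ℝ R R → R) :=
  (ψ.1 + φ.1, fun Z => ψ.2 Z + φ.2 Z)

/-- Negative of a section. -/
def negTV (ψ : Derivation ℝ R R × (Derivation ℝ R R → R)) :
    Derivation ℝ R R × (Derivation ℝ R R → R) :=
  (-ψ.1, fun Z => - ψ.2 Z)


lemma oneForm_sub {ξ : Derivation ℝ R R → R} (h : IsOneForm ξ) (a b : Derivation ℝ R R) :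
    ξ (a - b) = ξ a - ξ b := by
  have h1 : (-1 : R) • b + a = a - b := by rw [neg_one_smul]; abel
  have h2 := h (-1) b a
  rw [h1] at h2
  rw [h2]; ring

lemma dorfman_key (H : Derivation ℝ R R → Derivation ℝ R R → Derivation ℝ R R → R)
    (hH : IsThreeForm H) (X Y Z W : Derivation ℝ R R) (ξ η ζ : Derivation ℝ R R → R)
    (hξ : IsOneForm ξ) (hη : IsOneForm η) (hζ : IsOneForm ζ) :
    (dorfman H (X,ξ) (dorfman H (Y,η) (Z,ζ))).2 W =
      (dorfman H (dorfman H (X,ξ) (Y,η)) (Z,ζ)).2 W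
      + (dorfman H (Y,η) (dorfman H (X,ξ) (Z,ζ))).2 W + - dThree H X Y Z W := by
  obtain ⟨-, -, -, h4, h5⟩ := hH
  simp only [dorfman, dThree, Derivation.commutator_apply, lie_lie, map_sub, map_add,
    oneForm_sub hξ, oneForm_sub hη, oneForm_sub hζ]
  ring_nf
  linear_combination -(h4 X ⁅Y,Z⁆ W) + (h4 Y ⁅X,Z⁆ W) - (h4 X ⁅Z,W⁆ Y) - (h4 ⁅X,W⁆ Y Z) + (h5 Y ⁅X,W⁆ Z) + (h4 ⁅Y,W⁆ X Z) - (h5 X ⁅Y,W⁆ Z) + (h5 X ⁅Z,W⁆ Y)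

/-- For the `H`-twisted Dorfman bracket with `H` a (not necessarily
closed) `3`-form, the failure of the Leibniz identity is measured exactly by `dH`:
the Jacobiator equals `(0, −dH(X,Y,Z,·))` where `X, Y, Z` are the vector parts of
the three sections. In particular, the Leibniz identity holds for all sections if
and only if `dH = 0`. -/
theorem dorfman_jacobiator_eq_dH
    (H : Derivation ℝ R R → Derivation ℝ R R → Derivation ℝ R R → R)
    (hH : IsThreeForm H) :
    -- the Jacobiator is `(0, −dH(X,Y,Z,·))`
    (∀ ψ φ χ, IsOneForm ψ.2 → IsOneForm φ.2 → IsOneForm χ.2 →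
      dorfman H ψ (dorfman H φ χ) =
        addTV (addTV (dorfman H (dorfman H ψ φ) χ) (dorfman H φ (dorfman H ψ χ)))
          ((0 : Derivation ℝ R R), fun W => - dThree H ψ.1 φ.1 χ.1 W)) ∧
    -- the Leibniz identity holds for all sections iff `dH = 0`
    ((∀ ψ φ χ, IsOneForm ψ.2 → IsOneForm φ.2 → IsOneForm χ.2 →
      dorfman H ψ (dorfman H φ χ) =
        addTV (dorfman H (dorfman H ψ φ) χ) (dorfman H φ (dorfman H ψ χ))) ↔
      (∀ X Y Z W, dThree H X Y Z W = 0)) := by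
  have h0 : IsOneForm (fun _ : Derivation ℝ R R => (0 : R)) := by
    intro f a b; ring
  have hjac : ∀ ψ φ χ : Derivation ℝ R R × (Derivation ℝ R R → R),
      IsOneForm ψ.2 → IsOneForm φ.2 → IsOneForm χ.2 →
      dorfman H ψ (dorfman H φ χ) =
        addTV (addTV (dorfman H (dorfman H ψ φ) χ) (dorfman H φ (dorfman H ψ χ)))
          ((0 : Derivation ℝ R R), fun W => - dThree H ψ.1 φ.1 χ.1 W) := by
    rintro ⟨X, ξ⟩ ⟨Y, η⟩ ⟨Z, ζ⟩ hψ hφ hχ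
    apply Prod.ext
    · show ⁅X, ⁅Y, Z⁆⁆ = _
      simp only [addTV, dorfman, lie_lie]
      abel
    · funext W
      have := dorfman_key H hH X Y Z W ξ η ζ hψ hφ hχ
      simpa [addTV] using this
  refine ⟨hjac, ?_, ?_⟩
  · intro hL X Y Z W
    have h1 := hL (X, fun _ => 0) (Y, fun _ => 0) (Z, fun _ => 0) h0 h0 h0
    have h2 := hjac (X, fun _ => 0) (Y, fun _ => 0) (Z, fun _ => 0) h0 h0 h0
    rw [h1] at h2
    have h3 := congrArg (fun p : Derivation ℝ R R × (Derivation ℝ R R → R) => p.2 W) h2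
    simp only [addTV] at h3
    linear_combination h3
  · intro hd ψ φ χ hψ hφ hχ
    rw [hjac ψ φ χ hψ hφ hχ]
    apply Prod.ext
    · simp [addTV]
    · funext W
      simp [addTV, hd]

end Dorfman
end

section
/- Let ∇ be a Courant algebroid connection on a Courant algebroid (E, ρ, ⟨·,·⟩_E, [·,·]_E). Define T_G(ψ,ψ',ψ'') = ⟨∇_ψ ψ' − ∇_{ψ'} ψ − [ψ,ψ']_E, ψ''⟩_E + ⟨∇_{ψ''} ψ, ψ'⟩_E. Then T_G is C^∞(M)-trilinear and totally skew-symmetric in its three arguments, i.e., T_G defines a 3-form on E. -/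
/-!
An algebraic model of a Courant algebroid over a manifold `M`:
`R` plays the role of the ring of smooth functions `C^∞(M)`, vector fields on `M`
are modelled by derivations of `R`, and `E` plays the role of the module of
sections `Γ(E)`.
-/

/-- A Courant algebroid: a module `E` (of sections) with an anchor `ρ` valued in
vector fields (derivations of `R`), a symmetric `R`-bilinear pairing, and an
`ℝ`-bilinear bracket, satisfying the Leibniz rule, the Leibniz (Jacobi) identity,
invariance of the pairing and the symmetric-part formula, where
`D : C^∞(M) → Γ(E)` is determined by `⟨D f, ψ⟩ = ρ(ψ).f`. -/
structure CourantAlgebroid (R : Type*) [CommRing R] [Algebra ℝ R]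
    (E : Type*) [AddCommGroup E] [Module ℝ E] [Module R E] where
  ρ : E → Derivation ℝ R R
  ρ_smul : ∀ (f : R) (ψ : E), ρ (f • ψ) = f • ρ ψ
  ρ_add : ∀ ψ ψ', ρ (ψ + ψ') = ρ ψ + ρ ψ'
  pair : E → E → R
  pair_symm : ∀ ψ ψ', pair ψ ψ' = pair ψ' ψ
  pair_smul : ∀ (f : R) (ψ ψ' : E), pair (f • ψ) ψ' = f * pair ψ ψ'
  pair_add : ∀ ψ₁ ψ₂ ψ', pair (ψ₁ + ψ₂) ψ' = pair ψ₁ ψ' + pair ψ₂ ψ'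
  bracket : E → E → E
  bracket_add_left : ∀ ψ₁ ψ₂ ψ', bracket (ψ₁ + ψ₂) ψ' = bracket ψ₁ ψ' + bracket ψ₂ ψ'
  bracket_add_right : ∀ ψ ψ₁ ψ₂, bracket ψ (ψ₁ + ψ₂) = bracket ψ ψ₁ + bracket ψ ψ₂
  bracket_smulR : ∀ (r : ℝ) (ψ ψ' : E), bracket ψ (r • ψ') = r • bracket ψ ψ'
  /-- The map `D : C^∞(M) → Γ(E)`. -/
  Dz : R → E
  pair_Dz : ∀ (f : R) (ψ : E), pair (Dz f) ψ = ρ ψ f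
  /-- Leibniz rule `[ψ, fψ'] = f[ψ,ψ'] + (ρ(ψ).f)ψ'`. -/
  leibniz : ∀ (ψ ψ' : E) (f : R), bracket ψ (f • ψ') = f • bracket ψ ψ' + (ρ ψ f) • ψ'
  /-- Leibniz (Jacobi) identity. -/
  jacobi : ∀ ψ ψ' ψ'', bracket ψ (bracket ψ' ψ'') =
    bracket (bracket ψ ψ') ψ'' + bracket ψ' (bracket ψ ψ'')
  /-- Invariance of the pairing. -/
  invariance : ∀ ψ ψ' ψ'', ρ ψ (pair ψ' ψ'') =
    pair (bracket ψ ψ') ψ'' + pair ψ' (bracket ψ ψ'')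
  /-- Symmetric part formula `[ψ,ψ'] = −[ψ',ψ] + D⟨ψ,ψ'⟩`. -/
  sym_part : ∀ ψ ψ', bracket ψ ψ' = - bracket ψ' ψ + Dz (pair ψ ψ')

variable {R : Type*} [CommRing R] [Algebra ℝ R]
variable {E : Type*} [AddCommGroup E] [Module ℝ E] [Module R E]

/-- The torsion `3`-form
`T_G(ψ,ψ',ψ'') = ⟨∇_ψ ψ' − ∇_{ψ'} ψ − [ψ,ψ']_E, ψ''⟩_E + ⟨∇_{ψ''} ψ, ψ'⟩_E`
of a Courant algebroid connection `∇`. -/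
def torsionForm (C : CourantAlgebroid R E) (nab : E → E → E) (ψ ψ' ψ'' : E) : R :=
  C.pair (nab ψ ψ' - nab ψ' ψ - C.bracket ψ ψ') ψ'' + C.pair (nab ψ'' ψ) ψ'

/-- For a Courant algebroid connection `∇` (first slot
`C^∞(M)`-linear, Leibniz rule in the second slot, compatible with the pairing),
the torsion `T_G` is `C^∞(M)`-trilinear and totally skew-symmetric, i.e. it
defines a `3`-form on `E`. -/
theorem torsionForm_is_three_form
    (C : CourantAlgebroid R E) (nab : E → E → E)
    (h1 : ∀ (f : R) (ψ ψ' : E), nab (f • ψ) ψ' = f • nab ψ ψ')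
    (h1' : ∀ ψ₁ ψ₂ ψ', nab (ψ₁ + ψ₂) ψ' = nab ψ₁ ψ' + nab ψ₂ ψ')
    (h2 : ∀ (f : R) (ψ ψ' : E), nab ψ (f • ψ') = f • nab ψ ψ' + (C.ρ ψ f) • ψ')
    (h2' : ∀ ψ ψ₁ ψ₂, nab ψ (ψ₁ + ψ₂) = nab ψ ψ₁ + nab ψ ψ₂)
    (hmetric : ∀ ψ ψ' ψ'', C.ρ ψ (C.pair ψ' ψ'') =
      C.pair (nab ψ ψ') ψ'' + C.pair ψ' (nab ψ ψ'')) :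
    -- totally skew-symmetric
    (∀ ψ ψ' ψ'', torsionForm C nab ψ ψ' ψ'' = - torsionForm C nab ψ' ψ ψ'') ∧
    (∀ ψ ψ' ψ'', torsionForm C nab ψ ψ' ψ'' = - torsionForm C nab ψ ψ'' ψ') ∧
    -- `C^∞(M)`-trilinear
    (∀ (f : R) (ψ φ ψ' ψ'' : E), torsionForm C nab (f • ψ + φ) ψ' ψ'' =
      f * torsionForm C nab ψ ψ' ψ'' + torsionForm C nab φ ψ' ψ'') ∧
    (∀ (f : R) (ψ ψ' φ ψ'' : E), torsionForm C nab ψ (f • ψ' + φ) ψ'' =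
      f * torsionForm C nab ψ ψ' ψ'' + torsionForm C nab ψ φ ψ'') ∧
    (∀ (f : R) (ψ ψ' ψ'' φ : E), torsionForm C nab ψ ψ' (f • ψ'' + φ) =
      f * torsionForm C nab ψ ψ' ψ'' + torsionForm C nab ψ ψ' φ) := by

  -- pairing helper lemmas
  have pnl : ∀ x y : E, C.pair (-x) y = - C.pair x y := by
    intro x y
    have h := C.pair_smul (-1) x y
    rw [neg_one_smul] at h
    rw [h]; ring
  have par : ∀ (x a b : E), C.pair x (a + b) = C.pair x a + C.pair x b := by
    intro x a b
    rw [C.pair_symm x (a + b), C.pair_add, C.pair_symm a x, C.pair_symm b x]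
  have psr : ∀ (f : R) (x a : E), C.pair x (f • a) = f * C.pair x a := by
    intro f x a
    rw [C.pair_symm x (f • a), C.pair_smul, C.pair_symm a x]
  -- key identity 1
  have key1 : ∀ ψ ψ' ψ'' : E,
      C.pair (C.bracket ψ ψ') ψ'' + C.pair (C.bracket ψ' ψ) ψ'' =
      C.pair (nab ψ'' ψ) ψ' + C.pair (nab ψ'' ψ') ψ := by
    intro ψ ψ' ψ''
    have e1 := hmetric ψ'' ψ ψ'
    rw [C.pair_symm ψ (nab ψ'' ψ')] at e1
    rw [C.sym_part ψ ψ', C.pair_add, pnl, C.pair_Dz, e1]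
    ring
  -- key identity 2
  have key2 : ∀ ψ ψ' ψ'' : E,
      C.pair (nab ψ ψ') ψ'' + C.pair (nab ψ ψ'') ψ' =
      C.pair (C.bracket ψ ψ') ψ'' + C.pair (C.bracket ψ ψ'') ψ' := by
    intro ψ ψ' ψ''
    have e1 := hmetric ψ ψ' ψ''
    have e2 := C.invariance ψ ψ' ψ''
    rw [C.pair_symm ψ' (nab ψ ψ'')] at e1
    rw [C.pair_symm ψ' (C.bracket ψ ψ'')] at e2
    linear_combination e2 - e1
  have skew12 : ∀ ψ ψ' ψ'' : E,
      torsionForm C nab ψ ψ' ψ'' = - torsionForm C nab ψ' ψ ψ'' := by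
    intro ψ ψ' ψ''
    simp only [torsionForm, sub_eq_add_neg, C.pair_add, pnl]
    linear_combination - key1 ψ ψ' ψ''
  have skew23 : ∀ ψ ψ' ψ'' : E,
      torsionForm C nab ψ ψ' ψ'' = - torsionForm C nab ψ ψ'' ψ' := by
    intro ψ ψ' ψ''
    simp only [torsionForm, sub_eq_add_neg, C.pair_add, pnl]
    linear_combination key2 ψ ψ' ψ''
  have lin3 : ∀ (f : R) (ψ ψ' ψ'' φ : E), torsionForm C nab ψ ψ' (f • ψ'' + φ) =
      f * torsionForm C nab ψ ψ' ψ'' + torsionForm C nab ψ ψ' φ := by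
    intro f ψ ψ' ψ'' φ
    simp only [torsionForm, h1, h1', C.pair_add, C.pair_smul, par, psr]
    ring
  have cyc : ∀ a b c : E, torsionForm C nab a b c = torsionForm C nab b c a := by
    intro a b c
    rw [skew12 a b c, skew23 b a c, neg_neg]
  refine ⟨skew12, skew23, ?_, ?_, lin3⟩
  · intro f ψ φ ψ' ψ''
    rw [cyc _ ψ' ψ'', lin3 f ψ' ψ'' ψ φ, ← cyc ψ ψ' ψ'', ← cyc φ ψ' ψ'']
  · intro f ψ ψ' φ ψ''
    rw [skew23 ψ _ ψ'', lin3 f ψ ψ'' ψ' φ, skew23 ψ ψ' ψ'', skew23 ψ φ ψ'']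
    ring
end

section
/- Let E be a Courant algebroid over a connected manifold M with fiber-wise surjective anchor ρ, and let ℜ: 𝔤 → Γ(E) be a Lie algebra homomorphism into the Courant bracket, i.e., ℜ([x,y]_𝔤) = [ℜ(x),ℜ(y)]_E. Then the function ⟨ℜ(x),ℜ(y)⟩_E is constant on M for all x,y ∈ 𝔤, and the resulting bilinear form (x,y)_𝔤 := −⟨ℜ(x),ℜ(y)⟩_E on 𝔤 is symmetric and ad-invariant: ([x,y]_𝔤, z)_𝔤 + (y, [x,z]_𝔤)_𝔤 = 0. -/
/-- Let `E` be a Courant algebroid over a connected manifold `M`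
with fiber-wise surjective anchor (so that `Df = 0` forces `f` constant), and let
`ℜ : 𝔤 → Γ(E)` be linear and bracket-preserving.  Then `⟨ℜ(x),ℜ(y)⟩_E` is a
constant function for all `x, y ∈ 𝔤`, and the bilinear form
`(x,y)_𝔤 := −⟨ℜ(x),ℜ(y)⟩_E` is symmetric and ad-invariant:
`([x,y]_𝔤, z)_𝔤 + (y, [x,z]_𝔤)_𝔤 = 0`. -/
theorem equivariant_pairing_constant_symmetric_adInvariant
    {R : Type*} [CommRing R] [Algebra ℝ R]
    {E : Type*} [AddCommGroup E] [Module ℝ E] [Module R E]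
    (C : CourantAlgebroid R E)
    -- `M` connected and `ρ` fiber-wise surjective: `Df = 0` forces `f` constant
    (hconst : ∀ f : R, C.Dz f = 0 → ∃ r : ℝ, f = algebraMap ℝ R r)
    (g : Type*) [LieRing g] [LieAlgebra ℝ g]
    (ℜ : g → E)
    (hlin : ∀ (r : ℝ) (x y : g), ℜ (r • x + y) = r • ℜ x + ℜ y)
    (hhom : ∀ x y : g, ℜ ⁅x, y⁆ = C.bracket (ℜ x) (ℜ y)) :
    -- `⟨ℜ(x),ℜ(y)⟩_E` is constant on `M`
    (∀ x y : g, ∃ r : ℝ, C.pair (ℜ x) (ℜ y) = algebraMap ℝ R r) ∧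
    -- `(x,y)_𝔤 = −⟨ℜ(x),ℜ(y)⟩_E` is symmetric …
    (∀ x y : g, -C.pair (ℜ x) (ℜ y) = -C.pair (ℜ y) (ℜ x)) ∧
    -- … and ad-invariant
    (∀ x y z : g,
      (-C.pair (ℜ ⁅x, y⁆) (ℜ z)) + (-C.pair (ℜ y) (ℜ ⁅x, z⁆)) = 0) := by
  have hadd : ∀ x y : g, ℜ (x + y) = ℜ x + ℜ y := by
    intro x y
    have := hlin 1 x y
    simpa using this
  have hDz0 : ∀ x y : g, C.Dz (C.pair (ℜ x) (ℜ y)) = 0 := by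
    intro x y
    have h1 : ℜ ⁅x, y⁆ + ℜ ⁅y, x⁆ = 0 := by
      rw [← hadd]
      have : (⁅x, y⁆ + ⁅y, x⁆ : g) = 0 := by
        rw [← lie_skew]; abel
      rw [this]
      have h0 := hadd 0 0
      simpa using h0.symm
    have h2 := C.sym_part (ℜ x) (ℜ y)
    rw [← hhom, ← hhom] at h2
    have : C.Dz (C.pair (ℜ x) (ℜ y)) = ℜ ⁅x, y⁆ + ℜ ⁅y, x⁆ := by
      rw [h2]; abel
    rw [this, h1]
  have hc : ∀ x y : g, ∃ r : ℝ, C.pair (ℜ x) (ℜ y) = algebraMap ℝ R r :=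
    fun x y => hconst _ (hDz0 x y)
  refine ⟨hc, fun x y => by rw [C.pair_symm], fun x y z => ?_⟩
  have hinv := C.invariance (ℜ x) (ℜ y) (ℜ z)
  obtain ⟨r, hr⟩ := hc y z
  have hρ : (C.ρ (ℜ x)) (C.pair (ℜ y) (ℜ z)) = 0 := by
    rw [hr]
    exact Derivation.map_algebraMap _ r
  rw [hρ, ← hhom, ← hhom] at hinv
  linear_combination hinv
end

section
/- Let P → M be a principal G-bundle with connection A, 𝔤 compact semisimple with Killing form ⟨·,·⟩_𝔤 and H = π*(H₀) + ½ CS₃(A) the twisting 3-form on P. Define ℜ(x) = (#x, −½⟨A,x⟩_𝔤) ∈ Γ(TP ⊕ T*P). Then the H-twisted Dorfman bracket satisfies x ▷ (Y,η) := [ℜ(x),(Y,η)] = ([#x, Y], L_{#x} η) for all G-invariant H; i.e., the induced action on TP ⊕ T*P is the canonical lift of the principal action. (Key identity: i_{#x} CS₃(A) = ⟨dA, x⟩_𝔤.) -/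
/-!
An algebraic model of a principal `G`-bundle `π : P → M`:
`R` is the ring of smooth functions `C^∞(P)`, vector fields on `P` are derivations
of `R`, `g` is the Lie algebra of `G`, and `S` models the `R`-module `C^∞(P, 𝔤)` of
`𝔤`-valued functions, with its pointwise Lie bracket `brS`, pointwise invariant
pairing `c`, componentwise derivative `par`, constants `ι : 𝔤 → C^∞(P,𝔤)`,
fundamental vector fields `σ` and their `C^∞(P)`-linear extension
`σhat : C^∞(P,𝔤) → 𝔛(P)` (the map `j`).
-/

structure GaugeModel (R : Type*) [CommRing R] [Algebra ℝ R]
    (g : Type*) [LieRing g] [LieAlgebra ℝ g]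
    (S : Type*) [AddCommGroup S] [Module R S] where
  /-- fundamental vector fields of the (right) `G`-action. -/
  σ : g → Derivation ℝ R R
  /-- the map `j` : vertical vector field generated by a `𝔤`-valued function. -/
  σhat : S → Derivation ℝ R R
  /-- constant `𝔤`-valued functions. -/
  ι : g → S
  /-- pointwise Lie bracket on `𝔤`-valued functions. -/
  brS : S → S → S
  /-- pointwise ad-invariant pairing `(·,·)_𝔤`. -/
  c : S → S → R
  /-- componentwise derivative of `𝔤`-valued functions along a vector field. -/
  par : Derivation ℝ R R → S → S
  σ_bracket : ∀ x y : g, ⁅σ x, σ y⁆ = σ ⁅x, y⁆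
  σhat_ι : ∀ x : g, σhat (ι x) = σ x
  σhat_smul : ∀ (f : R) (s : S), σhat (f • s) = f • σhat s
  σhat_add : ∀ s t : S, σhat (s + t) = σhat s + σhat t
  ι_add : ∀ x y : g, ι (x + y) = ι x + ι y
  ι_bracket : ∀ x y : g, ι ⁅x, y⁆ = brS (ι x) (ι y)
  brS_smul_left : ∀ (f : R) (a b : S), brS (f • a) b = f • brS a b
  brS_add_left : ∀ a a' b : S, brS (a + a') b = brS a b + brS a' b
  brS_antisymm : ∀ a b : S, brS a b = - brS b a
  brS_leibniz : ∀ a b e : S, brS a (brS b e) = brS (brS a b) e + brS b (brS a e)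
  c_symm : ∀ a b : S, c a b = c b a
  c_smul_left : ∀ (f : R) (a b : S), c (f • a) b = f * c a b
  c_add_left : ∀ a a' b : S, c (a + a') b = c a b + c a' b
  /-- ad-invariance of the pairing. -/
  c_ad : ∀ a b e : S, c (brS a b) e + c b (brS a e) = 0
  par_add : ∀ (X : Derivation ℝ R R) (s t : S), par X (s + t) = par X s + par X t
  par_smul : ∀ (X : Derivation ℝ R R) (f : R) (s : S),
    par X (f • s) = (X f) • s + f • par X s
  par_lin : ∀ (f : R) (X Y : Derivation ℝ R R) (s : S),
    par (f • X + Y) s = f • par X s + par Y s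
  /-- `par` is the (flat) componentwise derivative. -/
  par_flat : ∀ (X Y : Derivation ℝ R R) (s : S),
    par ⁅X, Y⁆ s = par X (par Y s) - par Y (par X s)
  par_const : ∀ (X : Derivation ℝ R R) (x : g), par X (ι x) = 0
  par_brS : ∀ (X : Derivation ℝ R R) (a b : S),
    par X (brS a b) = brS (par X a) b + brS a (par X b)
  par_c : ∀ (X : Derivation ℝ R R) (a b : S),
    X (c a b) = c (par X a) b + c a (par X b)
  /-- bracket of vertical vector fields. -/
  vert_bracket : ∀ a b : S,
    ⁅σhat a, σhat b⁆ = σhat (brS a b + par (σhat a) b - par (σhat b) a)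

namespace GaugeModel

variable {R : Type*} [CommRing R] [Algebra ℝ R]
variable {g : Type*} [LieRing g] [LieAlgebra ℝ g]
variable {S : Type*} [AddCommGroup S] [Module R S]

/-- A `𝔤`-valued function is `Ad`-equivariant (a section of the adjoint bundle
`𝔤_P`), infinitesimally: its derivative along any vertical vector field is given
by minus the pointwise bracket. -/
def IsEquivariant (M : GaugeModel R g S) (s : S) : Prop :=
  ∀ a : S, M.par (M.σhat a) s = - M.brS a s

end GaugeModel

namespace GaugeModel

variable {R : Type*} [CommRing R] [Algebra ℝ R]
variable {g : Type*} [LieRing g] [LieAlgebra ℝ g]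
variable {S : Type*} [AddCommGroup S] [Module R S]

/-- `dA(X,Y) = X.A(Y) − Y.A(X) − A([X,Y])` for a `𝔤`-valued `1`-form `A` on `P`. -/
def dA (M : GaugeModel R g S) (A : Derivation ℝ R R → S)
    (X Y : Derivation ℝ R R) : S :=
  M.par X (A Y) - M.par Y (A X) - A ⁅X, Y⁆

/-- The Chern–Simons `3`-form
`CS₃(A) = ⟨dA ∧ A⟩_𝔤 + (1/3)⟨[A ∧ A]_𝔤 ∧ A⟩_𝔤`, written out on vector fields. -/
noncomputable def CS3 (M : GaugeModel R g S) (A : Derivation ℝ R R → S)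
    (X Y Z : Derivation ℝ R R) : R :=
  (M.c (M.dA A X Y) (A Z) + M.c (M.dA A Y Z) (A X) + M.c (M.dA A Z X) (A Y))
    + (2 / 3 : ℝ) • (M.c (M.brS (A X) (A Y)) (A Z)
        + M.c (M.brS (A Y) (A Z)) (A X) + M.c (M.brS (A Z) (A X)) (A Y))

/-- With `H = π*(H₀) + ½ CS₃(A)` and
`ℜ(x) = (#x, −½⟨A,x⟩_𝔤)`, the `H`-twisted Dorfman bracket satisfies
`x ▷ (Y,η) = [ℜ(x),(Y,η)] = ([#x, Y], L_{#x} η)`: the induced action on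
`TP ⊕ T*P` is the canonical lift of the principal action.  The key identity is
`i_{#x} CS₃(A) = ⟨dA, x⟩_𝔤`. -/
theorem lifted_action_is_canonical
    (M : GaugeModel R g S)
    (A : Derivation ℝ R R → S)
    (hAlin : ∀ (f : R) (X Y : Derivation ℝ R R), A (f • X + Y) = f • A X + A Y)
    -- `A` is a principal connection: `A(#x) = x` …
    (hAconn : ∀ x : g, A (M.σ x) = M.ι x)
    -- … and `A` is `Ad`-equivariant: `L_{#x} A = −ad_x ∘ A`
    (hAeq : ∀ (x : g) (Y : Derivation ℝ R R),
      M.par (M.σ x) (A Y) - A ⁅M.σ x, Y⁆ = - M.brS (M.ι x) (A Y))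
    -- `H₀` is (the pullback of) a `3`-form on the base: basic and `G`-invariant
    (H₀ : Derivation ℝ R R → Derivation ℝ R R → Derivation ℝ R R → R)
    (hH₀alt₁ : ∀ X Y Z, H₀ X Y Z = - H₀ Y X Z)
    (hH₀alt₂ : ∀ X Y Z, H₀ X Y Z = - H₀ X Z Y)
    (hH₀bas : ∀ (x : g) (Y Z : Derivation ℝ R R), H₀ (M.σ x) Y Z = 0)
    (hH₀inv : ∀ (x : g) (Y Z W : Derivation ℝ R R),
      M.σ x (H₀ Y Z W) = H₀ ⁅M.σ x, Y⁆ Z W + H₀ Y ⁅M.σ x, Z⁆ W + H₀ Y Z ⁅M.σ x, W⁆) :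
    -- key identity `i_{#x} CS₃(A) = ⟨dA, x⟩_𝔤`
    (∀ (x : g) (Y Z : Derivation ℝ R R),
      M.CS3 A (M.σ x) Y Z = M.c (M.dA A Y Z) (M.ι x)) ∧
    -- `x ▷ (Y,η) = ([#x,Y], L_{#x}η)`: with `ξ = −½⟨A,x⟩_𝔤` and
    -- `H = H₀ + ½CS₃(A)`, the covector part `L_{#x}η − i_Y dξ − H(#x,Y,·)` of the
    -- Dorfman bracket reduces to the Lie derivative `L_{#x}η`
    (∀ (x : g) (Y : Derivation ℝ R R) (η : Derivation ℝ R R → R)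
        (Z : Derivation ℝ R R),
      (M.σ x (η Z) - η ⁅M.σ x, Z⁆)
        - (Y ((-(1 / 2 : ℝ)) • M.c (A Z) (M.ι x))
            - Z ((-(1 / 2 : ℝ)) • M.c (A Y) (M.ι x))
            - (-(1 / 2 : ℝ)) • M.c (A ⁅Y, Z⁆) (M.ι x))
        - (H₀ (M.σ x) Y Z + (1 / 2 : ℝ) • M.CS3 A (M.σ x) Y Z)
      = M.σ x (η Z) - η ⁅M.σ x, Z⁆) := by
  -- basic linearity consequences for `A`
  have hA0 : A 0 = 0 := by
    have h := hAlin 1 0 0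
    simp only [one_smul, add_zero] at h
    exact (add_eq_right.mp h.symm)
  have hAneg : ∀ W : Derivation ℝ R R, A (-W) = -A W := by
    intro W
    have h := hAlin (-1) W 0
    simpa [hA0, neg_one_smul] using h
  -- basic consequences for `c`
  have hc0 : ∀ a : S, M.c (0 : S) a = 0 := by
    intro a
    have h := M.c_smul_left 0 0 a
    simpa using h
  have hc0r : ∀ a : S, M.c a (0 : S) = 0 := fun a => by rw [M.c_symm]; exact hc0 a
  have hcneg : ∀ a b : S, M.c (-a) b = - M.c a b := by
    intro a b
    have h := M.c_smul_left (-1) a b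
    simpa [neg_one_smul] using h
  have hcsub : ∀ a b e : S, M.c (a - b) e = M.c a e - M.c b e := by
    intro a b e
    rw [sub_eq_add_neg, M.c_add_left, hcneg, sub_eq_add_neg]
  -- interior products of `dA` with fundamental vector fields
  have h1 : ∀ (x : g) (Y : Derivation ℝ R R),
      M.dA A (M.σ x) Y = - M.brS (M.ι x) (A Y) := by
    intro x Y
    unfold GaugeModel.dA
    rw [hAconn, M.par_const, sub_zero]
    exact hAeq x Y
  have h2 : ∀ (x : g) (Z : Derivation ℝ R R),
      M.dA A Z (M.σ x) = M.brS (M.ι x) (A Z) := by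
    intro x Z
    unfold GaugeModel.dA
    rw [hAconn, M.par_const, zero_sub]
    have hb : (⁅Z, M.σ x⁆ : Derivation ℝ R R) = -⁅M.σ x, Z⁆ := by
      rw [← lie_skew]
    rw [hb, hAneg]
    have h := hAeq x Z
    have h' : M.brS (M.ι x) (A Z) = A ⁅M.σ x, Z⁆ - M.par (M.σ x) (A Z) := by
      rw [← neg_sub (M.par (M.σ x) (A Z)) (A ⁅M.σ x, Z⁆), h, neg_neg]
    rw [h']
    abel
  -- key identity `i_{#x} CS₃(A) = ⟨dA, x⟩_𝔤`
  have key : ∀ (x : g) (Y Z : Derivation ℝ R R),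
      M.CS3 A (M.σ x) Y Z = M.c (M.dA A Y Z) (M.ι x) := by
    intro x Y Z
    unfold GaugeModel.CS3
    rw [h1 x Y, h2 x Z, hAconn]
    set i := M.ι x with hi
    set u := A Y with hu
    set v := A Z with hv
    set t := M.c (M.brS i u) v with ht
    have e0 : M.c (- M.brS i u) v = -t := hcneg _ _
    have e1 : M.c (M.brS i v) u = -t := by
      have h := M.c_ad i v u
      have h2' : M.c v (M.brS i u) = t := M.c_symm _ _
      rw [h2'] at h
      linear_combination h
    have e2 : M.c (M.brS u v) i = t := by
      have h := M.c_ad u v i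
      have hb : M.brS u i = - M.brS i u := M.brS_antisymm u i
      rw [hb, M.c_symm v, hcneg] at h
      -- h : c (brS u v) i + -(c (brS i u) v) = 0
      rw [← ht] at h
      linear_combination h
    have e3 : M.c (M.brS v i) u = t := by
      have hb : M.brS v i = - M.brS i v := M.brS_antisymm v i
      rw [hb, hcneg, e1, neg_neg]
    rw [e0, e1, e2, e3]
    -- goal: -t + c(dA Y Z) i + -t + (2/3)•(t + t + t) = c(dA Y Z) i
    module
  refine ⟨key, ?_⟩
  intro x Y η Z
  rw [hH₀bas, key, zero_add]
  -- derivations commute with real scalars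
  have hsmul : ∀ (D : Derivation ℝ R R) (r : ℝ) (a : R), D (r • a) = r • D a := by
    intro D r a
    exact D.map_smul r a
  rw [hsmul Y, hsmul Z]
  -- derivative of the pairing with a constant section
  have hpc : ∀ (D : Derivation ℝ R R) (s : S),
      D (M.c s (M.ι x)) = M.c (M.par D s) (M.ι x) := by
    intro D s
    rw [M.par_c, M.par_const, hc0r, add_zero]
  rw [hpc Y, hpc Z]
  have hdac : M.c (M.dA A Y Z) (M.ι x)
      = M.c (M.par Y (A Z)) (M.ι x) - M.c (M.par Z (A Y)) (M.ι x)
        - M.c (A ⁅Y, Z⁆) (M.ι x) := by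
    unfold GaugeModel.dA
    rw [hcsub, hcsub]
  rw [hdac]
  module

end GaugeModel
end

section
/- Let ℜ(x) = (#x, −½(A,x)_𝔤) define the lifted action on E = TP ⊕ T*P with H-twisted Dorfman bracket, and let K = ℜ(P×𝔤) ⊆ E. Then for any Φ ∈ C^∞(P,𝔤), x ▷ ℜ(Φ) = ℜ([x,Φ]_𝔤 + #x.Φ); consequently K is invariant under the induced action, and ℜ(Φ) is a G-invariant section of K if and only if Φ is Ad-equivariant, i.e., Φ ∈ C^∞_{Ad}(P,𝔤) ≅ Γ(𝔤_P). -/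
namespace GaugeModel

variable {R : Type*} [CommRing R] [Algebra ℝ R]
variable {g : Type*} [LieRing g] [LieAlgebra ℝ g]
variable {S : Type*} [AddCommGroup S] [Module R S]

/-- The `C^∞(P)`-linear extension of `ℜ` to `𝔤`-valued functions:
`ℜ(Φ) = (j(Φ), −½(A,Φ)_𝔤) ∈ Γ(TP ⊕ T*P)`. -/
noncomputable def Rhat (M : GaugeModel R g S) (A : Derivation ℝ R R → S) (Φ : S) :
    Derivation ℝ R R × (Derivation ℝ R R → R) :=
  (M.σhat Φ, fun Z => (-(1 / 2 : ℝ)) • M.c (A Z) Φ)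

/-- The `H`-twisted Dorfman bracket on `Γ(TP ⊕ T*P)`, written pointwise. -/
def dorf (H : Derivation ℝ R R → Derivation ℝ R R → Derivation ℝ R R → R)
    (ψ φ : Derivation ℝ R R × (Derivation ℝ R R → R)) :
    Derivation ℝ R R × (Derivation ℝ R R → R) :=
  (⁅ψ.1, φ.1⁆, fun Z =>
    (ψ.1 (φ.2 Z) - φ.2 ⁅ψ.1, Z⁆)
      - (φ.1 (ψ.2 Z) - Z (ψ.2 φ.1) - ψ.2 ⁅φ.1, Z⁆)
      - H ψ.1 φ.1 Z)


section AuxLemmas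

variable {R : Type*} [CommRing R] [Algebra ℝ R]
variable {g : Type*} [LieRing g] [LieAlgebra ℝ g]
variable {S : Type*} [AddCommGroup S] [Module R S]
variable (M : GaugeModel R g S)

lemma aux_c_zero_left (b : S) : M.c 0 b = 0 := by
  have h := M.c_smul_left 0 0 b
  simpa using h

lemma aux_c_zero_right (a : S) : M.c a 0 = 0 := by
  rw [M.c_symm]; exact aux_c_zero_left M a

lemma aux_c_neg_left (a b : S) : M.c (-a) b = - M.c a b := by
  have h := M.c_smul_left (-1) a b
  simpa using h

lemma aux_c_sub_left (a a' b : S) : M.c (a - a') b = M.c a b - M.c a' b := by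
  rw [sub_eq_add_neg, M.c_add_left, aux_c_neg_left, ← sub_eq_add_neg]

lemma aux_c_add_right (a b b' : S) : M.c a (b + b') = M.c a b + M.c a b' := by
  rw [M.c_symm, M.c_add_left, M.c_symm b a, M.c_symm b' a]

/-- ad-invariance, rewritten. -/
lemma aux_c_ad' (a b e : S) : M.c (M.brS a b) e = - M.c b (M.brS a e) := by
  have h := M.c_ad a b e
  rw [add_comm] at h
  exact eq_neg_of_add_eq_zero_right h

/-- cyclic invariance of `c (brS · ·) ·`. -/
lemma aux_c_cyc (a b e : S) : M.c (M.brS a b) e = M.c (M.brS e a) b := by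
  rw [aux_c_ad', M.c_symm, M.brS_antisymm a e, aux_c_neg_left, neg_neg]

end AuxLemmas

/-- With `ℜ(x) = (#x, −½(A,x)_𝔤)` and the `H`-twisted Dorfman
bracket for `H = π*(H₀) + ½CS₃(A)`, let `K = ℜ(P×𝔤) ⊆ TP ⊕ T*P`.  For any
`Φ ∈ C^∞(P,𝔤)` one has `x ▷ ℜ(Φ) = ℜ([x,Φ]_𝔤 + #x.Φ)`; consequently `K` is
invariant under the induced action, and `ℜ(Φ)` is a `G`-invariant section of `K`
if and only if `Φ` is `Ad`-equivariant, i.e. `Φ ∈ C^∞_{Ad}(P,𝔤) ≅ Γ(𝔤_P)`. -/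
theorem action_on_K_and_invariant_sections
    (M : GaugeModel R g S)
    (A : Derivation ℝ R R → S)
    (hAlin : ∀ (f : R) (X Y : Derivation ℝ R R), A (f • X + Y) = f • A X + A Y)
    (hAconn : ∀ x : g, A (M.σ x) = M.ι x)
    (hAeq : ∀ (x : g) (Y : Derivation ℝ R R),
      M.par (M.σ x) (A Y) - A ⁅M.σ x, Y⁆ = - M.brS (M.ι x) (A Y))
    -- `H₀` is (the pullback of) a `3`-form on the base: basic and `G`-invariant
    (H₀ : Derivation ℝ R R → Derivation ℝ R R → Derivation ℝ R R → R)
    (hH₀alt₁ : ∀ X Y Z, H₀ X Y Z = - H₀ Y X Z)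
    (hH₀alt₂ : ∀ X Y Z, H₀ X Y Z = - H₀ X Z Y)
    (hH₀bas : ∀ (x : g) (Y Z : Derivation ℝ R R), H₀ (M.σ x) Y Z = 0)
    (hH₀inv : ∀ (x : g) (Y Z W : Derivation ℝ R R),
      M.σ x (H₀ Y Z W) = H₀ ⁅M.σ x, Y⁆ Z W + H₀ Y ⁅M.σ x, Z⁆ W + H₀ Y Z ⁅M.σ x, W⁆)
    -- `ℜ` (equivalently `j`) is fiber-wise injective
    (hinj : ∀ s : S, M.σhat s = 0 → s = 0) :
    -- `x ▷ ℜ(Φ) = ℜ([x,Φ]_𝔤 + #x.Φ)`; in particular `K` is invariant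
    (∀ (x : g) (Φ : S),
      dorf (fun X Y Z => H₀ X Y Z + (1 / 2 : ℝ) • M.CS3 A X Y Z)
          (M.Rhat A (M.ι x)) (M.Rhat A Φ) =
        M.Rhat A (M.brS (M.ι x) Φ + M.par (M.σ x) Φ)) ∧
    -- `ℜ(Φ)` is a `G`-invariant section iff `Φ` is `Ad`-equivariant
    (∀ Φ : S,
      (∀ x : g, dorf (fun X Y Z => H₀ X Y Z + (1 / 2 : ℝ) • M.CS3 A X Y Z)
          (M.Rhat A (M.ι x)) (M.Rhat A Φ) =
        ((0 : Derivation ℝ R R), fun _ => (0 : R))) ↔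
      (∀ x : g, M.par (M.σ x) Φ = - M.brS (M.ι x) Φ)) := by
  -- linearity consequences for `A`
  have hAadd : ∀ X Y : Derivation ℝ R R, A (X + Y) = A X + A Y := by
    intro X Y
    have h := hAlin 1 X Y
    simpa using h
  have hA0 : A 0 = 0 := by
    have h := hAadd 0 0
    rw [add_zero] at h
    exact (left_eq_add.mp h)
  have hAneg : ∀ X : Derivation ℝ R R, A (-X) = - A X := by
    intro X
    have h := hAadd X (-X)
    rw [add_neg_cancel, hA0] at h
    exact eq_neg_of_add_eq_zero_right h.symm
  have hσ0 : M.σhat (0 : S) = 0 := by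
    have h := M.σhat_add 0 0
    rw [add_zero] at h
    exact (left_eq_add.mp h)
  -- the key consequence of equivariance of the connection
  have hkey : ∀ (x : g) (W : Derivation ℝ R R),
      M.par (M.σ x) (A W) = - M.brS (M.ι x) (A W) + A ⁅M.σ x, W⁆ :=
    fun x W => sub_eq_iff_eq_add.mp (hAeq x W)
  -- the Chern–Simons form contracted with a fundamental vector field
  have hCS : ∀ (x : g) (Y Z : Derivation ℝ R R),
      M.CS3 A (M.σ x) Y Z =
        M.c (M.par Y (A Z)) (M.ι x) - M.c (M.par Z (A Y)) (M.ι x)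
          - M.c (A ⁅Y, Z⁆) (M.ι x) := by
    intro x Y Z
    have e1 : M.dA A (M.σ x) Y = - M.brS (M.ι x) (A Y) := by
      unfold dA
      rw [hAconn, M.par_const, hkey]
      abel
    have e2 : M.dA A Z (M.σ x) = M.brS (M.ι x) (A Z) := by
      unfold dA
      rw [hAconn, M.par_const, ← lie_skew Z (M.σ x), hAneg, hkey]
      abel
    have e3 : M.dA A Y Z = M.par Y (A Z) - M.par Z (A Y) - A ⁅Y, Z⁆ := rfl
    have r1 : M.c (M.brS (M.ι x) (A Z)) (A Y)
        = - M.c (M.brS (M.ι x) (A Y)) (A Z) := by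
      rw [aux_c_ad', M.c_symm]
    have r2 : M.c (M.brS (A Y) (A Z)) (M.ι x)
        = M.c (M.brS (M.ι x) (A Y)) (A Z) := by
      rw [aux_c_cyc]
    have r3 : M.c (M.brS (A Z) (M.ι x)) (A Y)
        = M.c (M.brS (M.ι x) (A Y)) (A Z) := by
      rw [aux_c_cyc, r2]
    unfold CS3
    rw [e1, e2, e3, hAconn, r1, r2, r3, aux_c_neg_left, aux_c_sub_left,
      aux_c_sub_left]
    module
  -- the main computation
  have main : ∀ (x : g) (Φ : S),
      dorf (fun X Y Z => H₀ X Y Z + (1 / 2 : ℝ) • M.CS3 A X Y Z)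
          (M.Rhat A (M.ι x)) (M.Rhat A Φ) =
        M.Rhat A (M.brS (M.ι x) Φ + M.par (M.σ x) Φ) := by
    intro x Φ
    unfold dorf Rhat
    refine Prod.ext ?_ ?_
    · show ⁅M.σhat (M.ι x), M.σhat Φ⁆ = M.σhat (M.brS (M.ι x) Φ + M.par (M.σ x) Φ)
      rw [M.vert_bracket, M.σhat_ι, M.par_const, sub_zero]
    · funext Z
      have Dsmul : ∀ (D : Derivation ℝ R R) (r : ℝ) (a : R),
          D (r • a) = r • D a := fun D r a => by simp
      dsimp only
      rw [M.σhat_ι]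
      rw [Dsmul, Dsmul, Dsmul, M.par_c, M.par_c, M.par_c,
        M.par_const, M.par_const, aux_c_zero_right, aux_c_zero_right,
        hH₀bas, hCS, hkey, M.c_add_left, aux_c_neg_left, aux_c_ad',
        aux_c_add_right]
      module
  refine ⟨main, fun Φ => ?_⟩
  constructor
  · intro h x
    have h2 := (main x Φ).symm.trans (h x)
    have h1 : M.σhat (M.brS (M.ι x) Φ + M.par (M.σ x) Φ) = 0 := by
      simpa [Rhat] using congrArg Prod.fst h2
    have h0 := hinj _ h1
    rw [add_comm] at h0
    exact eq_neg_of_add_eq_zero_left h0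
  · intro h x
    rw [main x Φ, h x, add_neg_cancel]
    unfold Rhat
    refine Prod.ext ?_ ?_
    · exact hσ0
    · funext Z
      dsimp only
      rw [aux_c_zero_right, smul_zero]


end GaugeModel
end

section
/- Let K ∈ T³₀(E') satisfy K(ψ,ψ',ψ'') = −K(ψ,ψ'',ψ'), K(ψ,ψ',τ(ψ'')) = −K(ψ,ψ'',τ(ψ')) where τ is the involution of a generalized metric G' on E', and the cyclic condition K(ψ,ψ',ψ'') + K(ψ',ψ'',ψ) + K(ψ'',ψ,ψ') = 0. If ∇' is a Levi-Civita connection on E' with respect to G', then ∇^K defined by ∇^K_ψ ψ' = ∇'_ψ ψ' + g_{E'}^{-1} K(ψ,ψ',·) is again a Levi-Civita connection on E' with respect to G' (i.e., ∇^K is metric compatible with both g_{E'} and G', and torsion-free). -/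
variable {R : Type*} [CommRing R] [Algebra ℝ R]
variable {E : Type*} [AddCommGroup E] [Module ℝ E] [Module R E]

/-- Let `(E',⟨·,·⟩,[·,·])` be a Courant algebroid with a
generalized metric `G'` (with involution `τ`), and let `K ∈ T³₀(E')` satisfy
`K(ψ,ψ',ψ'') = −K(ψ,ψ'',ψ')`, `K(ψ,ψ',τψ'') = −K(ψ,ψ'',τψ')` and the cyclic
condition `K(ψ,ψ',ψ'') + K(ψ',ψ'',ψ) + K(ψ'',ψ,ψ') = 0`.  If `∇'` is a
Levi-Civita connection with respect to `G'`, then `∇^K` defined by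
`∇^K_ψ ψ' = ∇'_ψ ψ' + g_{E'}^{-1} K(ψ,ψ',·)`, i.e. by
`⟨∇^K_ψ a, b⟩ = ⟨∇'_ψ a, b⟩ + K(ψ,a,b)`, is again a Levi-Civita connection with
respect to `G'`: it is a Courant algebroid connection (compatible with `g_{E'}`),
compatible with `G'`, and torsion-free. -/
theorem K_deformation_of_levi_civita
    (C : CourantAlgebroid R E)
    -- nondegeneracy of `⟨·,·⟩_{E'}` (so that `g_{E'}^{-1}` exists)
    (hnd : ∀ e : E, (∀ b : E, C.pair e b = 0) → e = 0)
    -- the generalized metric `G'` with its involution `τ`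
    (G' : E → E → R) (τ : E → E)
    (hτdef : ∀ ψ ψ', G' ψ ψ' = C.pair ψ (τ ψ'))
    (hτinv : ∀ ψ, τ (τ ψ) = ψ)
    (hτsym : ∀ ψ ψ', C.pair (τ ψ) ψ' = C.pair ψ (τ ψ'))
    (hτorth : ∀ ψ ψ', C.pair (τ ψ) (τ ψ') = C.pair ψ ψ')
    (hτlin : ∀ (f : R) (ψ ψ' : E), τ (f • ψ + ψ') = f • τ ψ + τ ψ')
    -- the tensor `K`
    (K : E → E → E → R)
    (hKlin₁ : ∀ (f : R) (ψ φ a b : E), K (f • ψ + φ) a b = f * K ψ a b + K φ a b)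
    (hKlin₂ : ∀ (f : R) (ψ a a' b : E), K ψ (f • a + a') b = f * K ψ a b + K ψ a' b)
    (hKlin₃ : ∀ (f : R) (ψ a b b' : E), K ψ a (f • b + b') = f * K ψ a b + K ψ a b')
    (hK1 : ∀ ψ a b, K ψ a b = - K ψ b a)
    (hK2 : ∀ ψ a b, K ψ a (τ b) + K ψ b (τ a) = 0)
    (hK3 : ∀ ψ a b, K ψ a b + K a b ψ + K b ψ a = 0)
    -- `∇'` is a Levi-Civita connection with respect to `G'`
    (nab : E → E → E)
    (h1 : ∀ (f : R) (ψ a : E), nab (f • ψ) a = f • nab ψ a)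
    (h1' : ∀ ψ φ a, nab (ψ + φ) a = nab ψ a + nab φ a)
    (h2 : ∀ (f : R) (ψ a : E), nab ψ (f • a) = f • nab ψ a + (C.ρ ψ f) • a)
    (h2' : ∀ ψ a a', nab ψ (a + a') = nab ψ a + nab ψ a')
    (hmetric : ∀ ψ a b, C.ρ ψ (C.pair a b) = C.pair (nab ψ a) b + C.pair a (nab ψ b))
    (hG'metric : ∀ ψ a b, C.ρ ψ (G' a b) = G' (nab ψ a) b + G' a (nab ψ b))
    (htorsion : ∀ ψ a b,
      C.pair (nab ψ a - nab a ψ - C.bracket ψ a) b + C.pair (nab b ψ) a = 0)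
    -- `∇^K` is the deformation of `∇'` by `K`
    (nabK : E → E → E)
    (hdef : ∀ ψ a b, C.pair (nabK ψ a) b = C.pair (nab ψ a) b + K ψ a b) :
    -- `∇^K` is again a Levi-Civita connection with respect to `G'`
    (∀ (f : R) (ψ a : E), nabK (f • ψ) a = f • nabK ψ a) ∧
    (∀ ψ φ a, nabK (ψ + φ) a = nabK ψ a + nabK φ a) ∧
    (∀ (f : R) (ψ a : E), nabK ψ (f • a) = f • nabK ψ a + (C.ρ ψ f) • a) ∧
    (∀ ψ a a', nabK ψ (a + a') = nabK ψ a + nabK ψ a') ∧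
    (∀ ψ a b, C.ρ ψ (C.pair a b) = C.pair (nabK ψ a) b + C.pair a (nabK ψ b)) ∧
    (∀ ψ a b, C.ρ ψ (G' a b) = G' (nabK ψ a) b + G' a (nabK ψ b)) ∧
    (∀ ψ a b,
      C.pair (nabK ψ a - nabK a ψ - C.bracket ψ a) b + C.pair (nabK b ψ) a = 0) := by
    -- basic pairing lemmas
  have p0 : ∀ b : E, C.pair 0 b = 0 := by
    intro b
    have h := C.pair_smul 0 b b
    simpa using h
  have pneg : ∀ x b : E, C.pair (-x) b = - C.pair x b := by
    intro x b
    have h := C.pair_add x (-x) b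
    rw [add_neg_cancel, p0] at h
    linear_combination -h
  have psub : ∀ x y b : E, C.pair (x - y) b = C.pair x b - C.pair y b := by
    intro x y b
    rw [sub_eq_add_neg, C.pair_add, pneg, sub_eq_add_neg]
  have ext : ∀ x y : E, (∀ b : E, C.pair x b = C.pair y b) → x = y := by
    intro x y h
    have h0 : x - y = 0 := by
      apply hnd
      intro b
      rw [psub, h b, sub_self]
    exact sub_eq_zero.mp h0
  -- K degeneracy / linearity lemmas
  have K0₁ : ∀ a b : E, K 0 a b = 0 := by
    intro a b
    have h := hKlin₁ 1 0 0 a b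
    simp at h
    exact h
  have K0₂ : ∀ ψ b : E, K ψ 0 b = 0 := by
    intro ψ b
    have h := hKlin₂ 1 ψ 0 0 b
    simp at h
    exact h
  have Ks₁ : ∀ (f : R) (ψ a b : E), K (f • ψ) a b = f * K ψ a b := by
    intro f ψ a b
    have h := hKlin₁ f ψ 0 a b
    rw [add_zero, K0₁, add_zero] at h
    exact h
  have Ks₂ : ∀ (f : R) (ψ a b : E), K ψ (f • a) b = f * K ψ a b := by
    intro f ψ a b
    have h := hKlin₂ f ψ a 0 b
    rw [add_zero, K0₂, add_zero] at h
    exact h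
  have Ka₁ : ∀ (ψ φ a b : E), K (ψ + φ) a b = K ψ a b + K φ a b := by
    intro ψ φ a b
    have h := hKlin₁ 1 ψ φ a b
    rw [one_smul, one_mul] at h
    exact h
  have Ka₂ : ∀ (ψ a a' b : E), K ψ (a + a') b = K ψ a b + K ψ a' b := by
    intro ψ a a' b
    have h := hKlin₂ 1 ψ a a' b
    rw [one_smul, one_mul] at h
    exact h
  refine ⟨?_, ?_, ?_, ?_, ?_, ?_, ?_⟩
  · -- nabK (f • ψ) a = f • nabK ψ a
    intro f ψ a
    apply ext
    intro b
    rw [hdef, h1, C.pair_smul, C.pair_smul, hdef, Ks₁]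
    ring
  · -- additivity in first argument
    intro ψ φ a
    apply ext
    intro b
    rw [hdef, h1', C.pair_add, C.pair_add, hdef, hdef, Ka₁]
    ring
  · -- Leibniz in second argument
    intro f ψ a
    apply ext
    intro b
    rw [hdef, h2, C.pair_add, C.pair_smul, C.pair_smul, C.pair_add, C.pair_smul,
      C.pair_smul, hdef, Ks₂]
    ring
  · -- additivity in second argument
    intro ψ a a'
    apply ext
    intro b
    rw [hdef, h2', C.pair_add, C.pair_add, hdef, hdef, Ka₂]
    ring
  · -- metric compatibility with the pairing
    intro ψ a b
    have ha : C.pair a (nabK ψ b) = C.pair a (nab ψ b) + K ψ b a := by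
      rw [C.pair_symm, hdef, C.pair_symm a]
    rw [hdef, ha, hmetric, hK1 ψ a b]
    ring
  · -- compatibility with G'
    intro ψ a b
    have ha : C.pair a (τ (nabK ψ b)) = C.pair a (τ (nab ψ b)) + K ψ b (τ a) := by
      rw [← hτsym, C.pair_symm, hdef, C.pair_symm (nab ψ b), hτsym]
    have hg := hG'metric ψ a b
    rw [hτdef, hτdef, hτdef] at hg
    rw [hτdef, hτdef, hτdef, hdef, ha]
    linear_combination hg - hK2 ψ a b
  · -- torsion-free
    intro ψ a b
    have ht := htorsion ψ a b
    rw [psub, psub] at ht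
    rw [psub, psub, hdef, hdef, hdef]
    linear_combination ht + hK3 ψ a b - hK1 a ψ b
end

section
/- Variation of the dilaton term: let S[φ] = ∫_P e^{−2φ}{ R(g) − ½⟨H',H'⟩_g + 4⟨dφ,dφ⟩_g − 2Λ } dvol_g with g, H', Λ fixed. For φ' = φ + εν with ν vanishing on ∂P, S[φ'] = S[φ] − 2ε ∫_P e^{−2φ} β(φ) ν dvol_g + o(ε²), where β(φ) = R(g) − ½⟨H',H'⟩_g + 4Δ_g(φ) − 4⟨dφ,dφ⟩_g − 2Λ and Δ_g = −(dδ_g + δ_g d). In particular, the key identity is δ_g(e^{−2φ} dφ) = e^{−2φ}(2⟨dφ,dφ⟩_g − Δ_g(φ)). -/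
/-!
An algebraic model of the variational problem for the dilaton: `R = C^∞(P)`,
`Ω1` the `1`-forms on `P`, `d` the differential, `δ` the codifferential, `inner`
the fiber-wise metric on `1`-forms, `I` the integral `f ↦ ∫_P f dvol_g`, `expR`
the exponential, `vanB` the predicate "vanishes on `∂P`", `rscal = R(g)` the
scalar curvature and `h2 = ⟨H',H'⟩_g`.
-/

/-- Variation of
`S[φ] = ∫_P e^{−2φ}{R(g) − ½⟨H',H'⟩_g + 4⟨dφ,dφ⟩_g − 2Λ} dvol_g` in the dilaton:
for `ν` vanishing on `∂P`, the first variation of `ε ↦ S[φ + εν]` at `ε = 0` is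
`−2 ∫_P e^{−2φ} β(φ) ν dvol_g`, where
`β(φ) = R(g) − ½⟨H',H'⟩_g + 4Δ_g(φ) − 4⟨dφ,dφ⟩_g − 2Λ` and `Δ_g(φ) = −δ_g dφ`.
The key identity is `δ_g(e^{−2φ} dφ) = e^{−2φ}(2⟨dφ,dφ⟩_g − Δ_g(φ))`. -/
theorem dilaton_variation
    (R : Type*) [CommRing R] [Algebra ℝ R]
    (Ω1 : Type*) [AddCommGroup Ω1] [Module ℝ Ω1] [Module R Ω1] [IsScalarTower ℝ R Ω1]
    (d : R → Ω1) (δ : Ω1 → R) (inner : Ω1 → Ω1 → R)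
    (I : R →ₗ[ℝ] ℝ) (expR : R → R) (vanB : R → Prop)
    (rscal h2 : R) (Λ : ℝ) (φ ν : R)
    -- `d` is an `ℝ`-linear derivation
    (hd_lin : ∀ (r : ℝ) (a b : R), d (r • a + b) = r • d a + d b)
    (hd_mul : ∀ a b : R, d (a * b) = a • d b + b • d a)
    -- `⟨·,·⟩_g` is `R`-bilinear and symmetric
    (hin_symm : ∀ ω μ, inner ω μ = inner μ ω)
    (hin_lin : ∀ (f : R) (ω ω' μ : Ω1), inner (f • ω + ω') μ = f * inner ω μ + inner ω' μ)
    -- exponential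
    (hexp0 : expR 0 = 1)
    (hexp_add : ∀ a b : R, expR (a + b) = expR a * expR b)
    (hexp_d : ∀ a : R, d (expR a) = expR a • d a)
    -- smoothness of the integral in a parameter
    (hder : ∀ a b : R, HasDerivAt (fun t : ℝ => I (expR (t • a) * b)) (I (a * b)) 0)
    -- `d` and `δ` are adjoint under the integral when boundary terms vanish
    (hadj : ∀ (a : R) (ω : Ω1), vanB a → I (inner (d a) ω) = I (a * δ ω))
    -- Leibniz rule for the codifferential
    (hδf : ∀ (f : R) (ω : Ω1), δ (f • ω) = f * δ ω - inner (d f) ω)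
    (hν : vanB ν) :
    -- first variation of the action in the dilaton
    (HasDerivAt
      (fun ε : ℝ => I (expR ((-2 : ℝ) • (φ + ε • ν)) *
        (rscal - (1 / 2 : ℝ) • h2
          + (4 : ℝ) • inner (d (φ + ε • ν)) (d (φ + ε • ν))
          - algebraMap ℝ R (2 * Λ))))
      (-2 * I (expR ((-2 : ℝ) • φ) *
        ((rscal - (1 / 2 : ℝ) • h2 + (4 : ℝ) • (-(δ (d φ)))
          - (4 : ℝ) • inner (d φ) (d φ) - algebraMap ℝ R (2 * Λ)) * ν)))
      0) ∧
    -- key identity `δ_g(e^{−2φ} dφ) = e^{−2φ}(2⟨dφ,dφ⟩_g − Δ_g(φ))`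
    (δ (expR ((-2 : ℝ) • φ) • d φ) =
      expR ((-2 : ℝ) • φ) * ((2 : ℝ) • inner (d φ) (d φ) - (-(δ (d φ))))) := by
  -- basic consequences of the hypotheses
  have hd0 : d (0 : R) = 0 := by
    have h := hd_lin 1 0 0
    simp only [one_smul, add_zero] at h
    have h' : d (0 : R) + 0 = d (0 : R) + d (0 : R) := by simpa using h
    exact (add_left_cancel h').symm
  have hd_add : ∀ a b : R, d (a + b) = d a + d b := by
    intro a b; simpa using hd_lin 1 a b
  have hd_smul : ∀ (r : ℝ) (a : R), d (r • a) = r • d a := by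
    intro r a
    have h := hd_lin r a 0
    simpa [hd0] using h
  have hin_add : ∀ ω ω' μ : Ω1, inner (ω + ω') μ = inner ω μ + inner ω' μ := by
    intro ω ω' μ; simpa using hin_lin 1 ω ω' μ
  have hin0 : ∀ μ : Ω1, inner 0 μ = 0 := by
    intro μ
    have h := hin_add 0 0 μ
    simp only [add_zero] at h
    have h' : inner (0 : Ω1) μ + 0 = inner (0 : Ω1) μ + inner (0 : Ω1) μ := by simpa using h
    exact (add_left_cancel h').symm
  have hinR : ∀ (f : R) (ω μ : Ω1), inner (f • ω) μ = f * inner ω μ := by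
    intro f ω μ
    simpa [hin0] using hin_lin f ω 0 μ
  have hinr : ∀ (r : ℝ) (ω μ : Ω1), inner (r • ω) μ = r • inner ω μ := by
    intro r ω μ
    rw [← algebraMap_smul R r ω, hinR, Algebra.smul_def]
  set e : R := expR ((-2 : ℝ) • φ) with he
  set p : R := inner (d φ) (d φ) with hp
  set qc : R := inner (d φ) (d ν) with hqc
  set qn : R := inner (d ν) (d ν) with hqn
  -- the key identity
  have key : δ (e • d φ) = e * ((2 : ℝ) • p - (-(δ (d φ)))) := by
    have hde : d e = e • ((-2 : ℝ) • d φ) := by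
      rw [he, hexp_d, hd_smul]
    rw [hδf, hde, hinR, hinr]
    simp only [Algebra.smul_def, map_neg, map_ofNat]
    ring
  refine ⟨?_, key⟩
  -- the variational part
  set m : R := (-2 : ℝ) • ν with hm
  set B0 : R := e * (rscal - (1 / 2 : ℝ) • h2 + (4 : ℝ) • p - algebraMap ℝ R (2 * Λ)) with hB0
  set B1 : R := (8 : ℝ) • (e * qc) with hB1
  set B2 : R := (4 : ℝ) • (e * qn) with hB2
  -- pointwise decomposition of the integrand
  have hpt : ∀ ε : ℝ,
      expR ((-2 : ℝ) • (φ + ε • ν)) *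
        (rscal - (1 / 2 : ℝ) • h2
          + (4 : ℝ) • inner (d (φ + ε • ν)) (d (φ + ε • ν))
          - algebraMap ℝ R (2 * Λ))
      = expR (ε • m) * B0 + ε • (expR (ε • m) * B1) + (ε ^ 2) • (expR (ε • m) * B2) := by
    intro ε
    have hsplit : ((-2 : ℝ) • (φ + ε • ν)) = (-2 : ℝ) • φ + ε • m := by
      rw [hm, smul_add, smul_smul, smul_smul, mul_comm]
    have hexps : expR ((-2 : ℝ) • (φ + ε • ν)) = e * expR (ε • m) := by
      rw [hsplit, hexp_add, he]
    have hdφ : d (φ + ε • ν) = d φ + ε • d ν := by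
      rw [add_comm φ (ε • ν), hd_lin ε ν φ, add_comm]
    have hinn : inner (d φ + ε • d ν) (d φ + ε • d ν)
        = p + (2 * ε) • qc + (ε ^ 2) • qn := by
      rw [hin_add, hinr, hin_symm (d φ), hin_add, hinr,
        hin_symm (d ν) (d φ + ε • d ν), hin_add, hinr, hin_symm (d ν) (d φ),
        ← hp, ← hqc, ← hqn]
      module
    rw [hexps, hdφ, hinn, hB0, hB1, hB2]
    simp only [Algebra.smul_def, map_mul, map_pow, map_ofNat, map_neg]
    ring
  have hFG : (fun ε : ℝ => I (expR ((-2 : ℝ) • (φ + ε • ν)) *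
        (rscal - (1 / 2 : ℝ) • h2
          + (4 : ℝ) • inner (d (φ + ε • ν)) (d (φ + ε • ν))
          - algebraMap ℝ R (2 * Λ))))
      = fun ε : ℝ => I (expR (ε • m) * B0) + ε * I (expR (ε • m) * B1)
          + ε ^ 2 * I (expR (ε • m) * B2) := by
    funext ε
    rw [hpt ε, map_add, map_add, map_smul, map_smul, smul_eq_mul, smul_eq_mul]
  rw [hFG]
  have HG := ((hder m B0).add ((hasDerivAt_id (0 : ℝ)).mul (hder m B1))).add
    ((hasDerivAt_pow 2 (0 : ℝ)).mul (hder m B2))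
  -- integration by parts
  have hibp : I B1 = (8 : ℝ) * I (ν * (e * ((2 : ℝ) • p + δ (d φ)))) := by
    have h1 : e * qc = inner (d ν) (e • d φ) := by
      rw [hin_symm, hinR, hqc]
    have h2' : δ (e • d φ) = e * ((2 : ℝ) • p + δ (d φ)) := by
      rw [key, sub_neg_eq_add]
    rw [hB1, map_smul, smul_eq_mul, h1, hadj ν (e • d φ) hν, h2']
  -- identify the derivative value
  have hval : -2 * I (e *
        ((rscal - (1 / 2 : ℝ) • h2 + (4 : ℝ) • (-(δ (d φ)))
          - (4 : ℝ) • p - algebraMap ℝ R (2 * Λ)) * ν))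
      = I (m * B0) + (1 * I (expR ((0 : ℝ) • m) * B1) + 0 * I (m * B1))
        + ((↑2 * (0 : ℝ) ^ (2 - 1)) * I (expR ((0 : ℝ) • m) * B2)
            + (0 : ℝ) ^ 2 * I (m * B2)) := by
    simp only [zero_smul, hexp0, one_mul, mul_zero, zero_mul, add_zero, pow_succ,
      pow_zero, zero_pow, ne_eq, OfNat.ofNat_ne_zero, not_false_eq_true]
    rw [hibp]
    rw [show (-2 : ℝ) * I (e *
        ((rscal - (1 / 2 : ℝ) • h2 + (4 : ℝ) • (-(δ (d φ)))
          - (4 : ℝ) • p - algebraMap ℝ R (2 * Λ)) * ν))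
      = I ((-2 : ℝ) • (e *
        ((rscal - (1 / 2 : ℝ) • h2 + (4 : ℝ) • (-(δ (d φ)))
          - (4 : ℝ) • p - algebraMap ℝ R (2 * Λ)) * ν))) from by
        rw [map_smul, smul_eq_mul],
      show (8 : ℝ) * I (ν * (e * ((2 : ℝ) • p + δ (d φ))))
      = I ((8 : ℝ) • (ν * (e * ((2 : ℝ) • p + δ (d φ))))) from by
        rw [map_smul, smul_eq_mul],
      ← map_add]
    congr 1
    rw [hm, hB0]
    simp only [Algebra.smul_def, map_neg, map_ofNat]
    ring
  rw [hval]
  exact HG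
end
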